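/- The sequential compound of short partizan games is associative: for all short games G, H, J, we have (G → H) → J identical to G → (H → J). -/

import Mathlib

namespace SetTheory

universe u

/-- Pre-games (as in Mathlib's former `SetTheory.PGame`, removed from Mathlib). -/
inductive PGame : Type (u + 1)
  | mk : ∀ α β : Type u, (α → PGame) → (β → PGame) → PGame

namespace PGame

/-- The type of left moves. -/
def LeftMoves : PGame → Type u
  | mk l _ _ _ => l

/-- The type of right moves. -/
def RightMoves : PGame → Type u
  | mk _ r _ _ => r

/-- The new game after Left makes a move. -/
def moveLeft : ∀ g : PGame, LeftMoves g → PGame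
  | mk _ _ L _ => L

/-- The new game after Right makes a move. -/
def moveRight : ∀ g : PGame, RightMoves g → PGame
  | mk _ _ _ R => R

instance : Zero PGame := ⟨⟨PEmpty, PEmpty, PEmpty.elim, PEmpty.elim⟩⟩

/-- Identity of pre-games (equality of game trees up to relabelling of moves). -/
def Identical : PGame.{u} → PGame.{u} → Prop
  | mk _ _ xL xR, mk _ _ yL yR =>
    Relator.BiTotal (fun i j ↦ Identical (xL i) (yL j)) ∧
      Relator.BiTotal (fun i j ↦ Identical (xR i) (yR j))

scoped infix:50 " ≡ " => PGame.Identical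

/-- Negation of pre-games. -/
def neg : PGame → PGame
  | ⟨l, r, L, R⟩ => ⟨r, l, fun i => neg (R i), fun i => neg (L i)⟩

instance : Neg PGame := ⟨neg⟩

/-- Auxiliary for addition: `x + y` by recursion on `y`, given `xL i + ·` and `xR j + ·`. -/
def addAux (xl xr : Type u) (fL : xl → PGame.{u} → PGame.{u}) (fR : xr → PGame.{u} → PGame.{u}) :
    PGame.{u} → PGame.{u}
  | mk yl yr yL yR =>
    mk (xl ⊕ yl) (xr ⊕ yr) (Sum.elim (fun i => fL i (mk yl yr yL yR)) (fun j => addAux xl xr fL fR (yL j)))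
      (Sum.elim (fun i => fR i (mk yl yr yL yR)) (fun j => addAux xl xr fL fR (yR j)))

/-- Disjunctive sum of pre-games. -/
def add : PGame.{u} → PGame.{u} → PGame.{u}
  | mk xl xr xL xR => addAux xl xr (fun i => add (xL i)) (fun j => add (xR j))

instance : Add PGame.{u} := ⟨add⟩

instance : Sub PGame := ⟨fun x y => x + -y⟩

/-- The pre-game `⋆ = {0 | 0}`. -/
def star : PGame.{u} := ⟨PUnit, PUnit, fun _ => 0, fun _ => 0⟩

/-- A short game: finitely many positions, with decidable equality on move types. -/
class inductive Short : PGame.{u} → Type (u + 1)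
  | mk :
    ∀ {α β : Type u} {L : α → PGame.{u}} {R : β → PGame.{u}} (_ : ∀ i : α, Short (L i))
      (_ : ∀ j : β, Short (R j)) [Fintype α] [Fintype β] [DecidableEq α] [DecidableEq β],
      Short ⟨α, β, L, R⟩

end PGame

end SetTheory

namespace SetTheory

namespace PGame

@[simp] theorem leftMoves_mk {xl xr : Type u} {xL : xl → PGame.{u}} {xR : xr → PGame.{u}} :
    (mk xl xr xL xR).LeftMoves = xl := rfl

@[simp] theorem rightMoves_mk {xl xr : Type u} {xL : xl → PGame.{u}} {xR : xr → PGame.{u}} :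
    (mk xl xr xL xR).RightMoves = xr := rfl

@[simp] theorem moveLeft_mk {xl xr : Type u} {xL : xl → PGame.{u}} {xR : xr → PGame.{u}} :
    (mk xl xr xL xR).moveLeft = xL := rfl

@[simp] theorem moveRight_mk {xl xr : Type u} {xL : xl → PGame.{u}} {xR : xr → PGame.{u}} :
    (mk xl xr xL xR).moveRight = xR := rfl

@[refl] theorem Identical.refl : ∀ x : PGame.{u}, Identical x x
  | mk _ _ L R => by
    rw [Identical]
    exact ⟨⟨fun i => ⟨i, Identical.refl (L i)⟩, fun i => ⟨i, Identical.refl (L i)⟩⟩,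
      ⟨fun i => ⟨i, Identical.refl (R i)⟩, fun i => ⟨i, Identical.refl (R i)⟩⟩⟩

theorem Identical.of_equiv {x y : PGame.{u}} (l : x.LeftMoves ≃ y.LeftMoves)
    (r : x.RightMoves ≃ y.RightMoves) (hl : ∀ i, Identical (x.moveLeft i) (y.moveLeft (l i)))
    (hr : ∀ i, Identical (x.moveRight i) (y.moveRight (r i))) : Identical x y := by
  cases x with
  | mk xl xr xL xR =>
  cases y with
  | mk yl yr yL yR =>
  rw [Identical]
  refine ⟨⟨fun i => ⟨l i, hl i⟩, fun j => ⟨l.symm j, ?_⟩⟩,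
    ⟨fun i => ⟨r i, hr i⟩, fun j => ⟨r.symm j, ?_⟩⟩⟩
  · have e : l (l.symm j) = j := l.apply_symm_apply j
    have h := hl (l.symm j)
    rw [e] at h
    exact h
  · have e : r (r.symm j) = j := r.apply_symm_apply j
    have h := hr (r.symm j)
    rw [e] at h
    exact h

end PGame

end SetTheory

open SetTheory

open scoped PGame

namespace SeqCompound

open Classical in
/-- The sequential compound `G → H` of two pregames. -/
noncomputable def seqc : PGame → PGame → PGame
  | PGame.mk α β L R, H =>
    if Nonempty α then
      if Nonempty β then
        PGame.mk α β (fun a => seqc (L a) H) (fun b => seqc (R b) H)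
      else
        PGame.mk α H.RightMoves (fun a => seqc (L a) H) H.moveRight
    else
      if Nonempty β then
        PGame.mk H.LeftMoves β H.moveLeft (fun b => seqc (R b) H)
      else H

/-- A pregame is dicotic (all-small) if in every subposition,
Left has an option iff Right has an option. -/
def Dicotic : PGame → Prop
  | PGame.mk α β L R =>
    (Nonempty α ↔ Nonempty β) ∧ (∀ a, Dicotic (L a)) ∧ (∀ b, Dicotic (R b))

/-- The canonical nonnegative integer game `{n-1 | }`. -/
def intGame : ℕ → PGame
  | 0 => 0
  | n + 1 => PGame.mk PUnit PEmpty (fun _ => intGame n) PEmpty.elim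

/-- `upSum k` is the disjunctive sum `↑¹ + ↑² + ⋯ + ↑ᵏ`. -/
def upSum : ℕ → PGame
  | 0 => 0
  | k + 1 => upSum k +
      PGame.mk PUnit PUnit (fun _ => 0) (fun _ => PGame.star - upSum k)

/-- `upPow k` is the game `↑^(k+1) = {0 | ∗ - (↑¹ + ⋯ + ↑ᵏ)}`. -/
def upPow (k : ℕ) : PGame :=
  PGame.mk PUnit PUnit (fun _ => 0) (fun _ => PGame.star - upSum k)

/-- Sequential compound of a list of games. -/
noncomputable def seqList : List PGame → PGame
  | [] => 0
  | G :: l => seqc G (seqList l)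


lemma seqc_nn {α β L R} (H : PGame) (hα : Nonempty α) (hβ : Nonempty β) :
    seqc (PGame.mk α β L R) H =
      PGame.mk α β (fun a => seqc (L a) H) (fun b => seqc (R b) H) := by
  simp [seqc, hα, hβ]

lemma seqc_ne {α β L R} (H : PGame) (hα : Nonempty α) (hβ : ¬Nonempty β) :
    seqc (PGame.mk α β L R) H =
      PGame.mk α H.RightMoves (fun a => seqc (L a) H) H.moveRight := by
  simp [seqc, hα, hβ]

lemma seqc_en {α β L R} (H : PGame) (hα : ¬Nonempty α) (hβ : Nonempty β) :
    seqc (PGame.mk α β L R) H =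
      PGame.mk H.LeftMoves β H.moveLeft (fun b => seqc (R b) H) := by
  simp [seqc, hα, hβ]

lemma seqc_ee {α β L R} (H : PGame) (hα : ¬Nonempty α) (hβ : ¬Nonempty β) :
    seqc (PGame.mk α β L R) H = H := by
  simp [seqc, hα, hβ]

theorem seqc_assoc' : ∀ (G H J : PGame), seqc (seqc G H) J ≡ seqc G (seqc H J) := by
  intro G
  induction G with
  | mk α β L R IHL IHR =>
  intro H J
  obtain ⟨γ, δ, HL, HR⟩ := H
  set H := PGame.mk γ δ HL HR with hH
  by_cases hα : Nonempty α <;> by_cases hβ : Nonempty β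
  · rw [seqc_nn H hα hβ, seqc_nn J hα hβ, seqc_nn (seqc H J) hα hβ]
    exact PGame.Identical.of_equiv (Equiv.refl _) (Equiv.refl _)
      (fun a => IHL a _ _) (fun b => IHR b _ _)
  · rw [seqc_ne H hα hβ, hH]
    simp only [PGame.rightMoves_mk, PGame.moveRight_mk]
    have ihl := fun a : α => IHL a (PGame.mk γ δ HL HR) J
    rw [seqc_ne (seqc (PGame.mk γ δ HL HR) J) hα hβ]
    by_cases hγ : Nonempty γ <;> by_cases hδ : Nonempty δ
    · rw [seqc_nn J hγ hδ, seqc_nn J hα hδ]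
      simp only [seqc_nn J hγ hδ] at ihl
      exact PGame.Identical.of_equiv (Equiv.refl _) (Equiv.refl _)
        (fun a => ihl a) (fun j => .refl _)
    · rw [seqc_ne J hγ hδ, seqc_ne J hα hδ]
      simp only [seqc_ne J hγ hδ] at ihl
      exact PGame.Identical.of_equiv (Equiv.refl _) (Equiv.refl _)
        (fun a => ihl a) (fun j => .refl _)
    · rw [seqc_en J hγ hδ, seqc_nn J hα hδ]
      simp only [seqc_en J hγ hδ] at ihl
      exact PGame.Identical.of_equiv (Equiv.refl _) (Equiv.refl _)
        (fun a => ihl a) (fun j => .refl _)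
    · rw [seqc_ee J hγ hδ, seqc_ne J hα hδ]
      simp only [seqc_ee J hγ hδ] at ihl
      exact PGame.Identical.of_equiv (Equiv.refl _) (Equiv.refl _)
        (fun a => ihl a) (fun j => .refl _)
  · rw [seqc_en H hα hβ, hH]
    simp only [PGame.leftMoves_mk, PGame.moveLeft_mk]
    have ihr := fun b : β => IHR b (PGame.mk γ δ HL HR) J
    rw [seqc_en (seqc (PGame.mk γ δ HL HR) J) hα hβ]
    by_cases hγ : Nonempty γ <;> by_cases hδ : Nonempty δ
    · rw [seqc_nn J hγ hδ, seqc_nn J hγ hβ]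
      simp only [seqc_nn J hγ hδ] at ihr
      exact PGame.Identical.of_equiv (Equiv.refl _) (Equiv.refl _)
        (fun i => .refl _) (fun b => ihr b)
    · rw [seqc_ne J hγ hδ, seqc_nn J hγ hβ]
      simp only [seqc_ne J hγ hδ] at ihr
      exact PGame.Identical.of_equiv (Equiv.refl _) (Equiv.refl _)
        (fun i => .refl _) (fun b => ihr b)
    · rw [seqc_en J hγ hδ, seqc_en J hγ hβ]
      simp only [seqc_en J hγ hδ] at ihr
      exact PGame.Identical.of_equiv (Equiv.refl _) (Equiv.refl _)
        (fun i => .refl _) (fun b => ihr b)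
    · rw [seqc_ee J hγ hδ, seqc_en J hγ hβ]
      simp only [seqc_ee J hγ hδ] at ihr
      exact PGame.Identical.of_equiv (Equiv.refl _) (Equiv.refl _)
        (fun i => .refl _) (fun b => ihr b)
  · rw [seqc_ee H hα hβ, seqc_ee (seqc H J) hα hβ]

end SeqCompound

open SeqCompound in
/-- the sequential compound is associative (as game trees). -/
theorem seqc_assoc (G H J : PGame) [PGame.Short G] [PGame.Short H] [PGame.Short J] :
    seqc (seqc G H) J ≡ seqc G (seqc H J) := by
  exact seqc_assoc' G H J
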